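/- Analytic slow eigenvalue branch of the quadratic matrix pencil (Lemma 3.7, slow transverse modes): Let n ≥ 1 and A, B ∈ M_n(ℂ). Let a ∈ ℂ with a ≠ 0 be a simple eigenvalue of A (a simple root of the characteristic polynomial of A), with column eigenvector r (A r = a r) and row eigenvector l (l A = a l) normalized so that l r = 1, and set β := l B r. Then there exist r₀ > 0 and analytic maps μ : {|λ| < r₀} → ℂ and v : {|λ| < r₀} → ℂⁿ with μ(0) = 0 and v(0) = r such that ( μ(λ)² B − μ(λ) A − λ I ) v(λ) = 0 for all |λ| < r₀, and μ'(0) = −1/a, μ''(0) = 2β/a³; that is, μ(λ) = −λ/a + β λ²/a³ + O(λ³) as λ → 0. -/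

import Mathlib

open Matrix Metric Polynomial Module

lemma charpoly_shift_aux {n : ℕ} (A : Matrix (Fin n) (Fin n) ℂ) (a : ℂ) :
    (A - a • 1).charpoly = A.charpoly.comp (X + C a) := by
  have h1 : A.charpoly.comp (X + C a) = aeval (X + C a) A.charpoly := by
    rw [Polynomial.comp, aeval_def, Polynomial.algebraMap_eq]
  rw [h1, Matrix.charpoly, Matrix.charpoly, AlgHom.map_det]
  congr 1
  refine Matrix.ext fun i j => ?_
  simp only [AlgHom.mapMatrix_apply, Matrix.map_apply]
  by_cases h : i = j
  · subst h
    simp only [charmatrix_apply_eq, Matrix.sub_apply, Matrix.smul_apply, Matrix.one_apply_eq,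
      smul_eq_mul, mul_one, map_sub, aeval_X, aeval_C, map_sub]
    rw [Polynomial.algebraMap_eq]; ring
  · simp [charmatrix_apply_ne _ _ _ h, Matrix.one_apply_ne h]

lemma eig_unique_aux {n : ℕ} (A : Matrix (Fin n) (Fin n) ℂ) (a : ℂ)
    (hsimple : A.charpoly.rootMultiplicity a = 1)
    (r : Fin n → ℂ) (hr0 : r ≠ 0) (hr : A *ᵥ r = a • r)
    (w : Fin n → ℂ) (hw : A *ᵥ w = a • w) : ∃ c : ℂ, w = c • r := by
  classical
  set φ : Module.End ℂ (Fin n → ℂ) := Matrix.toLin' (A - a • 1) with hφ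
  have hφc : φ.charpoly = (A - a • 1).charpoly := by
    rw [← LinearMap.charpoly_toMatrix φ (Pi.basisFun ℂ (Fin n)),
      LinearMap.toMatrix_eq_toMatrix', LinearMap.toMatrix'_toLin']
  have hdim : Module.finrank ℂ (φ.maxGenEigenspace 0) = 1 := by
    rw [LinearMap.finrank_maxGenEigenspace_zero_eq, hφc, charpoly_shift_aux,
      ← Polynomial.rootMultiplicity_eq_natTrailingDegree, hsimple]
  have hmem : ∀ u : Fin n → ℂ, A *ᵥ u = a • u → u ∈ φ.maxGenEigenspace 0 := by
    intro u hu
    rw [Module.End.mem_maxGenEigenspace]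
    refine ⟨1, ?_⟩
    simp only [zero_smul, sub_zero, pow_one, hφ, Matrix.toLin'_apply, Matrix.sub_mulVec,
      Matrix.smul_mulVec, Matrix.one_mulVec, hu]
    abel
  have hrS := hmem r hr
  have hwS := hmem w hw
  obtain ⟨c, hc⟩ := (finrank_eq_one_iff_of_nonzero' (⟨r, hrS⟩ : φ.maxGenEigenspace 0)
    (by simpa using hr0)).mp hdim ⟨w, hwS⟩
  exact ⟨c, by simpa using congrArg Subtype.val hc.symm⟩

set_option maxHeartbeats 3200000 in
theorem slow_branch_matrix_pencil
    {n : ℕ} (hn : 1 ≤ n) (A B : Matrix (Fin n) (Fin n) ℂ)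
    (a : ℂ) (ha : a ≠ 0)
    (hsimple : A.charpoly.rootMultiplicity a = 1)
    (r l : Fin n → ℂ)
    (hr : A *ᵥ r = a • r) (hl : l ᵥ* A = a • l) (hlr : l ⬝ᵥ r = 1) :
    ∃ r₀ > (0 : ℝ), ∃ (μ : ℂ → ℂ) (v : ℂ → (Fin n → ℂ)),
      (∀ lam ∈ ball (0 : ℂ) r₀, AnalyticAt ℂ μ lam ∧ AnalyticAt ℂ v lam) ∧
      μ 0 = 0 ∧ v 0 = r ∧
      (∀ lam ∈ ball (0 : ℂ) r₀,
        (μ lam ^ 2 • B - μ lam • A - lam • (1 : Matrix (Fin n) (Fin n) ℂ)) *ᵥ v lam = 0) ∧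
      deriv μ 0 = -1 / a ∧
      deriv (deriv μ) 0 = 2 * (l ⬝ᵥ (B *ᵥ r)) / a ^ 3 := by
  classical
  have hr0 : r ≠ 0 := by
    intro h; rw [h] at hlr; simp [dotProduct_zero] at hlr
  have hkey : ∀ u : Fin n → ℂ, l ⬝ᵥ (A *ᵥ u) = a * (l ⬝ᵥ u) := by
    intro u
    rw [Matrix.dotProduct_mulVec, hl, smul_dotProduct, smul_eq_mul]
  -- continuous linear maps
  let Av : (Fin n → ℂ) →L[ℂ] (Fin n → ℂ) := LinearMap.toContinuousLinearMap (Matrix.mulVecLin A)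
  let Bv : (Fin n → ℂ) →L[ℂ] (Fin n → ℂ) := LinearMap.toContinuousLinearMap (Matrix.mulVecLin B)
  let lL : (Fin n → ℂ) →ₗ[ℂ] ℂ :=
    { toFun := fun u => l ⬝ᵥ u
      map_add' := fun x y => dotProduct_add l x y
      map_smul' := fun c x => by simpa using dotProduct_smul c l x }
  let lf : (Fin n → ℂ) →L[ℂ] ℂ := LinearMap.toContinuousLinearMap lL
  have hAv : ∀ u, Av u = A *ᵥ u := fun u => rfl
  have hBv : ∀ u, Bv u = B *ᵥ u := fun u => rfl
  have hlf : ∀ u, lf u = l ⬝ᵥ u := fun u => rfl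
  set ν₀ : ℂ := -(1 / a) with hν₀
  -- the map Φ
  set Φ : ℂ × ℂ × (Fin n → ℂ) → ℂ × ℂ × (Fin n → ℂ) :=
    fun x => (x.1, lf x.2.2 - 1, (x.1 * x.2.1 ^ 2) • Bv x.2.2 - x.2.1 • Av x.2.2 - x.2.2)
    with hΦdef
  set x₀ : ℂ × ℂ × (Fin n → ℂ) := ((0 : ℂ), ν₀, r) with hx₀
  have hΦ0 : Φ x₀ = 0 := by
    have h3 : ((0 : ℂ) * ν₀ ^ 2) • Bv r - ν₀ • Av r - r = 0 := by
      rw [hAv, hr, hν₀, smul_smul]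
      have : -(1 / a) * a = -1 := by field_simp
      rw [this]
      simp
    refine Prod.ext rfl (Prod.ext ?_ ?_)
    · show lf r - 1 = 0
      rw [hlf, hlr]; ring
    · exact h3
  -- smoothness of Φ
  have hΦC : ContDiff ℂ 2 Φ := by
    refine ContDiff.prodMk contDiff_fst (ContDiff.prodMk ?_ ?_)
    · exact (lf.contDiff.comp (contDiff_snd.comp contDiff_snd)).sub contDiff_const
    · refine ContDiff.sub (ContDiff.sub ?_ ?_) (contDiff_snd.comp contDiff_snd)
      · exact (contDiff_fst.mul ((contDiff_fst.comp contDiff_snd).pow 2)).smul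
          (Bv.contDiff.comp (contDiff_snd.comp contDiff_snd))
      · exact (contDiff_fst.comp contDiff_snd).smul
          (Av.contDiff.comp (contDiff_snd.comp contDiff_snd))
  -- the linearization T
  set fstL : (ℂ × ℂ × (Fin n → ℂ)) →L[ℂ] ℂ := ContinuousLinearMap.fst ℂ ℂ (ℂ × (Fin n → ℂ))
    with hfstL
  set sndL : (ℂ × ℂ × (Fin n → ℂ)) →L[ℂ] (ℂ × (Fin n → ℂ)) :=
    ContinuousLinearMap.snd ℂ ℂ (ℂ × (Fin n → ℂ)) with hsndL
  set sndfst : (ℂ × ℂ × (Fin n → ℂ)) →L[ℂ] ℂ :=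
    (ContinuousLinearMap.fst ℂ ℂ (Fin n → ℂ)).comp sndL with hsndfst
  set sndsnd : (ℂ × ℂ × (Fin n → ℂ)) →L[ℂ] (Fin n → ℂ) :=
    (ContinuousLinearMap.snd ℂ ℂ (Fin n → ℂ)).comp sndL with hsndsnd
  set T₃ : (ℂ × ℂ × (Fin n → ℂ)) →L[ℂ] (Fin n → ℂ) :=
    fstL.smulRight (ν₀ ^ 2 • (B *ᵥ r)) - sndfst.smulRight (A *ᵥ r) - ν₀ • (Av.comp sndsnd)
      - sndsnd with hT₃
  set T : (ℂ × ℂ × (Fin n → ℂ)) →L[ℂ] (ℂ × ℂ × (Fin n → ℂ)) :=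
    fstL.prod ((lf.comp sndsnd).prod T₃) with hT
  have hTapp : ∀ y : ℂ × ℂ × (Fin n → ℂ),
      T y = (y.1, l ⬝ᵥ y.2.2,
        y.1 • (ν₀ ^ 2 • (B *ᵥ r)) - y.2.1 • (A *ᵥ r) - ν₀ • (A *ᵥ y.2.2) - y.2.2) := by
    intro y; rfl
  have hΦT : HasFDerivAt Φ T x₀ := by
    have hx1 : HasFDerivAt (fun x : ℂ × ℂ × (Fin n → ℂ) => x.1) fstL x₀ := hasFDerivAt_fst
    have hx2 : HasFDerivAt (fun x : ℂ × ℂ × (Fin n → ℂ) => x.2) sndL x₀ := hasFDerivAt_snd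
    have hx21 : HasFDerivAt (fun x : ℂ × ℂ × (Fin n → ℂ) => x.2.1) sndfst x₀ :=
      hasFDerivAt_fst.comp x₀ hx2
    have hx22 : HasFDerivAt (fun x : ℂ × ℂ × (Fin n → ℂ) => x.2.2) sndsnd x₀ :=
      hasFDerivAt_snd.comp x₀ hx2
    have hBc : HasFDerivAt (fun x : ℂ × ℂ × (Fin n → ℂ) => Bv x.2.2) (Bv.comp sndsnd) x₀ :=
      Bv.hasFDerivAt.comp x₀ hx22
    have hAc : HasFDerivAt (fun x : ℂ × ℂ × (Fin n → ℂ) => Av x.2.2) (Av.comp sndsnd) x₀ :=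
      Av.hasFDerivAt.comp x₀ hx22
    have h2 : HasFDerivAt (fun x : ℂ × ℂ × (Fin n → ℂ) => lf x.2.2 - 1)
        (lf.comp sndsnd) x₀ := ((lf.hasFDerivAt.comp x₀ hx22).sub_const 1)
    have hsq : HasFDerivAt (fun x : ℂ × ℂ × (Fin n → ℂ) => x.2.1 ^ 2)
        (ν₀ • sndfst + ν₀ • sndfst) x₀ := by
      have h := hx21.mul hx21
      simp only [← pow_two] at h
      exact h
    have hsc := hx1.mul hsq
    have h3 := (((hsc.smul hBc).sub (hx21.smul hAc)).sub hx22)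
    have h := hx1.prodMk (h2.prodMk h3)
    refine h.congr_fderiv ?_
    refine ContinuousLinearMap.ext fun y => ?_
    refine Prod.ext rfl (Prod.ext rfl ?_)
    funext i
    have hx₀1 : x₀.1 = (0 : ℂ) := rfl
    have hx₀21 : x₀.2.1 = ν₀ := rfl
    have hx₀22 : x₀.2.2 = r := rfl
    simp only [hT₃, hx₀1, hx₀21, hx₀22, ContinuousLinearMap.prod_apply,
      ContinuousLinearMap.add_apply, ContinuousLinearMap.sub_apply,
      ContinuousLinearMap.smul_apply, ContinuousLinearMap.smulRight_apply,
      ContinuousLinearMap.comp_apply, ContinuousLinearMap.coe_fst',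
      ContinuousLinearMap.coe_snd', hAv, hBv, hTapp, hfstL, hsndL, hsndfst, hsndsnd,
      zero_smul, zero_add, add_zero, smul_smul, zero_mul, mul_zero, pow_one,
      Pi.add_apply, Pi.sub_apply, Pi.smul_apply, smul_eq_mul, Pi.neg_apply, Pi.mul_apply]
    ring
  -- T is invertible
  have hker : ∀ y : ℂ × ℂ × (Fin n → ℂ), T y = 0 → y = 0 := by
    intro y hy
    rw [hTapp] at hy
    have h1 : y.1 = 0 := congrArg Prod.fst hy
    have h2 : l ⬝ᵥ y.2.2 = 0 := congrArg (fun z => z.2.1) hy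
    have h3 : y.1 • (ν₀ ^ 2 • (B *ᵥ r)) - y.2.1 • (A *ᵥ r) - ν₀ • (A *ᵥ y.2.2) - y.2.2 = 0 :=
      congrArg (fun z => z.2.2) hy
    rw [h1, zero_smul] at h3
    have hdot := congrArg (fun u => l ⬝ᵥ u) h3
    simp only [dotProduct_sub, dotProduct_smul, smul_eq_mul, hkey,
      dotProduct_zero] at hdot
    rw [hlr, h2] at hdot
    have h5 : y.2.1 = 0 := by
      have hz : y.2.1 * a = 0 := by linear_combination -hdot
      rcases mul_eq_zero.mp hz with h | h
      · exact h
      · exact absurd h ha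
    rw [h5, zero_smul] at h3
    have h6 : A *ᵥ y.2.2 = a • y.2.2 := by
      funext i
      have hi := congrFun h3 i
      simp only [Pi.sub_apply, Pi.smul_apply, Pi.zero_apply, smul_eq_mul] at hi
      have hν : ν₀ = -(1 / a) := hν₀
      rw [hν] at hi
      have : (A *ᵥ y.2.2) i = a * y.2.2 i := by
        field_simp at hi
        linear_combination hi
      simpa [Pi.smul_apply, smul_eq_mul] using this
    obtain ⟨c, hc⟩ := eig_unique_aux A a hsimple r hr0 hr y.2.2 h6
    have hcz : c = 0 := by
      have h2' := h2
      rw [hc, dotProduct_smul, smul_eq_mul, hlr, mul_one] at h2'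
      exact h2'
    have h9 : y.2.2 = 0 := by rw [hc, hcz, zero_smul]
    exact Prod.ext h1 (Prod.ext h5 h9)
  have hinj : Function.Injective T := by
    intro y z h
    have : T (y - z) = 0 := by rw [map_sub, h, sub_self]
    have := hker _ this
    exact sub_eq_zero.mp this
  have hsurj : Function.Surjective T :=
    LinearMap.injective_iff_surjective.mp hinj
  set eqv : (ℂ × ℂ × (Fin n → ℂ)) ≃L[ℂ] (ℂ × ℂ × (Fin n → ℂ)) :=
    LinearEquiv.toContinuousLinearEquiv
      (LinearEquiv.ofBijective (T : (ℂ × ℂ × (Fin n → ℂ)) →ₗ[ℂ] (ℂ × ℂ × (Fin n → ℂ)))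
        ⟨hinj, hsurj⟩) with heqv
  have heqvT : (eqv : (ℂ × ℂ × (Fin n → ℂ)) →L[ℂ] (ℂ × ℂ × (Fin n → ℂ))) = T := by
    refine ContinuousLinearMap.ext fun y => ?_
    rfl
  have hf' : HasFDerivAt Φ
      ((eqv : (ℂ × ℂ × (Fin n → ℂ)) ≃L[ℂ] (ℂ × ℂ × (Fin n → ℂ))) :
        (ℂ × ℂ × (Fin n → ℂ)) →L[ℂ] (ℂ × ℂ × (Fin n → ℂ))) x₀ := by
    rw [heqvT]; exact hΦT
  -- local inverse
  have hn2 : (1 : WithTop ℕ∞) ≤ 2 := by norm_num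
  have hΦat : ContDiffAt ℂ 2 Φ x₀ := hΦC.contDiffAt
  set g : (ℂ × ℂ × (Fin n → ℂ)) → (ℂ × ℂ × (Fin n → ℂ)) := hΦat.localInverse hf' (by norm_num) with hg
  have hg0 : g (Φ x₀) = x₀ := hΦat.localInverse_apply_image hf' (by norm_num)
  have hgC : ContDiffAt ℂ 2 g (Φ x₀) := hΦat.to_localInverse hf' (by norm_num)
  have hri : ∀ᶠ y in nhds (Φ x₀), Φ (g y) = y :=
    (hΦat.hasStrictFDerivAt' hf' (by norm_num)).eventually_right_inverse
  rw [hΦ0] at hg0 hgC hri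
  obtain ⟨u, hu, hgu⟩ := hgC.contDiffOn hn2 (by intro h; exact absurd h (by norm_num))
  have hS : {y | Φ (g y) = y} ∩ u ∈ nhds (0 : ℂ × ℂ × (Fin n → ℂ)) := Filter.inter_mem hri hu
  obtain ⟨ε, hε, hball⟩ := Metric.mem_nhds_iff.mp hS
  set ι : ℂ → ℂ × ℂ × (Fin n → ℂ) := fun lam => (lam, 0, 0) with hι
  have hι0 : ι 0 = 0 := rfl
  have hιmem : ∀ lam ∈ ball (0:ℂ) ε, ι lam ∈ ball (0 : ℂ × ℂ × (Fin n → ℂ)) ε := by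
    intro lam hlam
    rw [mem_ball_zero_iff] at hlam ⊢
    have hnorm : ‖ι lam‖ = ‖lam‖ := by
      rw [hι]
      simp only [Prod.norm_def, norm_zero, Prod.norm_def]
      rw [max_self, max_eq_left (norm_nonneg _)]
    rw [hnorm]; exact hlam
  set ν : ℂ → ℂ := fun lam => (g (ι lam)).2.1 with hνdef
  set v : ℂ → (Fin n → ℂ) := fun lam => (g (ι lam)).2.2 with hvdef
  have hψ0 : g (ι 0) = x₀ := by rw [hι0]; exact hg0
  have hν0 : ν 0 = ν₀ := congrArg (fun z => z.2.1) hψ0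
  have hv0 : v 0 = r := congrArg (fun z => z.2.2) hψ0
  have hgd : DifferentiableOn ℂ g (ball (0 : ℂ × ℂ × (Fin n → ℂ)) ε) :=
    (hgu.mono (fun y hy => (hball hy).2)).differentiableOn one_ne_zero
  have hιd : ∀ lam : ℂ, DifferentiableAt ℂ ι lam := fun lam =>
    differentiableAt_fun_id.prodMk (differentiableAt_const _)
  have hψd : ∀ lam ∈ ball (0:ℂ) ε, DifferentiableAt ℂ (fun t => g (ι t)) lam := fun lam hlam =>
    (hgd.differentiableAt (isOpen_ball.mem_nhds (hιmem lam hlam))).comp lam (hιd lam)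
  have hνd : ∀ lam ∈ ball (0:ℂ) ε, DifferentiableAt ℂ ν lam := fun lam h => ((hψd lam h).snd).fst
  have hvd : ∀ lam ∈ ball (0:ℂ) ε, DifferentiableAt ℂ v lam := fun lam h => ((hψd lam h).snd).snd
  have hId : ∀ lam ∈ ball (0:ℂ) ε, Φ (g (ι lam)) = ι lam := fun lam h => (hball (hιmem lam h)).1
  have hfst : ∀ lam ∈ ball (0:ℂ) ε, (g (ι lam)).1 = lam := fun lam h =>
    congrArg Prod.fst (hId lam h)
  have hlv : ∀ lam ∈ ball (0:ℂ) ε, l ⬝ᵥ v lam = 1 := by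
    intro lam h
    have h2 : l ⬝ᵥ v lam - 1 = 0 := congrArg (fun z => z.2.1) (hId lam h)
    linear_combination h2
  have hvec : ∀ lam ∈ ball (0:ℂ) ε,
      (lam * (ν lam) ^ 2) • (B *ᵥ v lam) - ν lam • (A *ᵥ v lam) - v lam = 0 := by
    intro lam h
    have h3 : ((g (ι lam)).1 * (ν lam) ^ 2) • Bv (v lam) - ν lam • Av (v lam) - v lam = 0 :=
      congrArg (fun z => z.2.2) (hId lam h)
    rw [hfst lam h, hAv, hBv] at h3
    exact h3
  have hd0 : DifferentiableAt ℂ ν 0 := hνd 0 (mem_ball_self hε)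
  have hv0d : DifferentiableAt ℂ v 0 := hvd 0 (mem_ball_self hε)
  refine ⟨ε, hε, (fun lam => lam * ν lam), v, ?_, ?_, ?_, ?_, ?_, ?_⟩
  · intro lam hlam
    constructor
    · exact DifferentiableOn.analyticAt
        (fun x hx => (differentiableAt_fun_id.mul (hνd x hx)).differentiableWithinAt)
        (isOpen_ball.mem_nhds hlam)
    · exact DifferentiableOn.analyticAt (fun x hx => (hvd x hx).differentiableWithinAt)
        (isOpen_ball.mem_nhds hlam)
  · exact zero_mul _
  · exact hv0
  · intro lam hlam
    have hv3 := hvec lam hlam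
    rw [Matrix.sub_mulVec, Matrix.sub_mulVec, Matrix.smul_mulVec,
      Matrix.smul_mulVec, Matrix.smul_mulVec, Matrix.one_mulVec]
    have hrw : (lam * ν lam) ^ 2 • (B *ᵥ v lam) - (lam * ν lam) • (A *ᵥ v lam) - lam • v lam
        = lam • ((lam * (ν lam) ^ 2) • (B *ᵥ v lam) - ν lam • (A *ᵥ v lam) - v lam) := by
      module
    rw [hrw, hv3, smul_zero]
  · have hμ' : HasDerivAt (fun t => t * ν t) (ν 0) 0 := by
      have h := (hasDerivAt_id 0).mul hd0.hasDerivAt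
      simpa [Pi.mul_def] using h
    rw [hμ'.deriv, hν0, hν₀]; ring
  · set d : ℂ := deriv ν 0 with hddef
    have hνA : AnalyticAt ℂ ν 0 :=
      DifferentiableOn.analyticAt (s := ball (0:ℂ) ε)
        (fun x hx => (hνd x hx).differentiableWithinAt)
        (isOpen_ball.mem_nhds (mem_ball_self hε))
    have hdνd : DifferentiableAt ℂ (deriv ν) 0 := by
      have h1 : DifferentiableAt ℂ (fun x => fderiv ℂ ν x 1) 0 :=
        hνA.fderiv.differentiableAt.clm_apply (differentiableAt_const 1)
      have h2 : deriv ν = fun x => fderiv ℂ ν x 1 := by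
        funext x; exact fderiv_apply_one_eq_deriv.symm
      rw [h2]; exact h1
    have hder : deriv (fun t => t * ν t) =ᶠ[nhds (0:ℂ)]
        (fun lam => ν lam + lam * deriv ν lam) := by
      filter_upwards [Metric.ball_mem_nhds (0:ℂ) hε] with lam hlam
      have h := ((hasDerivAt_id lam).mul (hνd lam hlam).hasDerivAt).deriv
      simpa [Pi.mul_def] using h
    have h2nd : deriv (deriv (fun t => t * ν t)) 0
        = deriv (fun lam => ν lam + lam * deriv ν lam) 0 := hder.deriv_eq
    have hsum : HasDerivAt (fun lam => ν lam + lam * deriv ν lam) (d + d) 0 := by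
      have ha2 := (hasDerivAt_id 0).mul hdνd.hasDerivAt
      have := hd0.hasDerivAt.add ha2
      simpa [Pi.mul_def, Pi.add_def] using this
    rw [h2nd, hsum.deriv]
    -- compute d
    have hscalar : (fun lam => lam * ((ν lam) ^ 2 * (l ⬝ᵥ (B *ᵥ v lam)))) =ᶠ[nhds (0:ℂ)]
        (fun lam => a * ν lam + 1) := by
      filter_upwards [Metric.ball_mem_nhds (0:ℂ) hε] with lam hlam
      have h3 := congrArg (fun u => l ⬝ᵥ u) (hvec lam hlam)
      simp only [dotProduct_sub, dotProduct_smul, smul_eq_mul, hkey,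
        dotProduct_zero] at h3
      rw [hlv lam hlam] at h3
      linear_combination h3
    have hFd : HasDerivAt (fun lam => lam * ((ν lam) ^ 2 * (l ⬝ᵥ (B *ᵥ v lam))))
        ((ν 0) ^ 2 * (l ⬝ᵥ (B *ᵥ v 0))) 0 := by
      have hBvd : DifferentiableAt ℂ (fun lam => l ⬝ᵥ (B *ᵥ v lam)) 0 := by
        have heq : (fun lam => l ⬝ᵥ (B *ᵥ v lam)) = fun lam => (lf.comp Bv) (v lam) := rfl
        rw [heq]
        exact ((lf.comp Bv).differentiable.differentiableAt).comp 0 hv0d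
      have hp : DifferentiableAt ℂ (fun lam => (ν lam) ^ 2 * (l ⬝ᵥ (B *ᵥ v lam))) 0 :=
        (hd0.pow 2).mul hBvd
      have h := (hasDerivAt_id 0).mul hp.hasDerivAt
      simpa [Pi.mul_def] using h
    have hGd : HasDerivAt (fun lam => a * ν lam + 1) (a * d) 0 :=
      (hd0.hasDerivAt.const_mul a).add_const 1
    have hEq : (ν 0) ^ 2 * (l ⬝ᵥ (B *ᵥ v 0)) = a * d := by
      rw [← hFd.deriv, ← hGd.deriv]
      exact hscalar.deriv_eq
    rw [hν0, hν₀, hv0] at hEq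
    have hd : d = (l ⬝ᵥ (B *ᵥ r)) / a ^ 3 := by
      field_simp at hEq
      field_simp
      linear_combination -hEq
    rw [hd]; ring
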